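/- Under the assumption that for all c̄ ∈ O* and μ_ε-almost all infinite sequences ã the limit lim_{k→∞} g_c̄(ã^k)/g_ε(ã^k) exists (where ã^k is the length-k prefix), the Radon–Nikodym density of μ_c̄ with respect to μ_ε is given μ_ε-almost everywhere by γ(g_c̄)(ã) = lim_{k→∞} g_c̄(ã^k)/g_ε(ã^k). -/

import Mathlib

open MeasureTheory Filter

/-- The cylinder set of infinite sequences beginning with the finite word `b`. -/
def cylinder {O : Type*} (b : List O) : Set (ℕ → O) :=
  {x | ∀ (i : ℕ) (h : i < b.length), x i = b.get ⟨i, h⟩}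

/-- The length-`k` prefix of an infinite sequence, as a finite word. -/
def wordPrefix {O : Type*} (x : ℕ → O) (k : ℕ) : List O := (List.range k).map x

lemma cylinder_nil {O : Type*} : _root_.cylinder ([] : List O) = Set.univ := by
  ext x; simp [_root_.cylinder]

lemma wordPrefix_eq_iff {O : Type*} (x : ℕ → O) (w : List O) (k : ℕ) (hk : w.length = k) :
    wordPrefix x k = w ↔ x ∈ cylinder w := by
  subst hk
  constructor
  · intro h i hi
    have := List.getElem_of_eq h.symm hi
    simp only [List.get_eq_getElem]
    rw [this]
    simp [wordPrefix]
  · intro h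
    apply List.ext_getElem (by simp [wordPrefix])
    intro i h1 h2
    have := h i h2
    simp only [List.get_eq_getElem] at this
    simp [wordPrefix, this]

lemma cylinder_succ {O : Type*} (w : List O) :
    cylinder w = ⋃ c : O, cylinder (w ++ [c]) := by
  ext x
  simp only [Set.mem_iUnion]
  constructor
  · intro h
    refine ⟨x w.length, fun i hi => ?_⟩
    rcases lt_or_eq_of_le (Nat.lt_succ_iff.mp (by simpa using hi)) with h' | h'
    · rw [List.get_eq_getElem, List.getElem_append_left h']
      exact h i h'
    · subst h'
      simp
  · intro ⟨c, hc⟩ i hi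
    have := hc i (by simp; omega)
    rwa [List.get_eq_getElem, List.getElem_append_left hi] at this

lemma cylinder_disj {O : Type*} (w : List O) :
    Pairwise (Function.onFun Disjoint fun c : O => cylinder (w ++ [c])) := by
  intro c c' hcc
  refine Set.disjoint_left.mpr fun x hx hx' => hcc ?_
  have h1 := hx w.length (by simp)
  have h2 := hx' w.length (by simp)
  simp at h1 h2
  rw [← h1, ← h2]

theorem stmt14 {O : Type*} [Countable O] [Nonempty O]
    [m : MeasurableSpace (ℕ → O)]
    (hm : m = MeasurableSpace.generateFrom {S | ∃ w : List O, S = cylinder w})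
    (gc ge : List O → ℝ) (hgc0 : ∀ w, 0 ≤ gc w) (hge0 : ∀ w, 0 ≤ ge w)
    (pc : ℝ) (hpc : 0 < pc) (hbound : ∀ w, pc * gc w ≤ ge w)
    (hgccons : ∀ b : List O, HasSum (fun c : O => gc (b ++ [c])) (gc b))
    (hgecons : ∀ b : List O, HasSum (fun c : O => ge (b ++ [c])) (ge b))
    (μc με : Measure (ℕ → O)) [IsFiniteMeasure μc] [IsFiniteMeasure με]
    (hμc : ∀ w : List O, μc (cylinder w) = ENNReal.ofReal (gc w))
    (hμε : ∀ w : List O, με (cylinder w) = ENNReal.ofReal (ge w))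
    (hμcu : μc Set.univ = ENNReal.ofReal (gc []))
    (hμεu : με Set.univ = ENNReal.ofReal (ge []))
    (γ : (ℕ → O) → ℝ) (hγm : Measurable γ) (hγi : Integrable γ με)
    (hγ : ∀ A : Set (ℕ → O), MeasurableSet A → (μc A).toReal = ∫ x in A, γ x ∂με)
    (hlim : ∀ᵐ x ∂με, ∃ L : ℝ,
      Tendsto (fun k => gc (wordPrefix x k) / ge (wordPrefix x k)) atTop (nhds L)) :
    ∀ᵐ x ∂με,
      Tendsto (fun k => gc (wordPrefix x k) / ge (wordPrefix x k)) atTop (nhds (γ x)) := by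
  have hcylm : ∀ w : List O, MeasurableSet (_root_.cylinder w) := fun w => by
    rw [hm]; exact MeasurableSpace.measurableSet_generateFrom ⟨w, rfl⟩
  set r : List O → ℝ := fun v => gc v / ge v with hr
  have hr0 : ∀ v, 0 ≤ r v := fun v => div_nonneg (hgc0 v) (hge0 v)
  have hgc_of_ge : ∀ v, ge v = 0 → gc v = 0 := fun v hv => by
    have h1 := hbound v; have h2 := hgc0 v; nlinarith
  have hrb : ∀ v, r v ≤ 1 / pc := by
    intro v
    rcases (hge0 v).lt_or_eq with h | h
    · rw [hr, div_le_div_iff₀ h hpc]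
      have := hbound v; nlinarith
    · simp [hr, ← h, div_nonneg (le_of_lt hpc)]
      positivity
  -- measurability of the prefix-ratio functions
  have hfm : ∀ k : ℕ, Measurable (fun x : ℕ → O => r (wordPrefix x k)) := by
    intro k
    have hpm : @Measurable _ _ _ ⊤ (fun x : ℕ → O => wordPrefix x k) := by
      apply @measurable_to_countable' (List O) (ℕ → O) ⊤ _ _ _
      intro w
      by_cases hw : w.length = k
      · have : (fun x : ℕ → O => wordPrefix x k) ⁻¹' {w} = _root_.cylinder w := by
          ext x; simp [wordPrefix_eq_iff x w k hw]
        rw [this]; exact hcylm w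
      · have : (fun x : ℕ → O => wordPrefix x k) ⁻¹' {w} = ∅ := by
          ext x
          simp only [Set.mem_preimage, Set.mem_singleton_iff, Set.mem_empty_iff_false,
            iff_false]
          intro h
          exact hw (by rw [← h]; simp [wordPrefix])
        rw [this]; exact MeasurableSet.empty
    exact (measurable_from_top (f := r)).comp hpm
  have hfint : ∀ k : ℕ, Integrable (fun x : ℕ → O => r (wordPrefix x k)) με := by
    intro k
    refine (integrable_const (1 / pc)).mono' (hfm k).aestronglyMeasurable ?_
    exact Filter.Eventually.of_forall fun x => by
      rw [Real.norm_of_nonneg (hr0 _)]; exact hrb _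
  -- the key computation
  have key : ∀ (n : ℕ) (w : List O) (k : ℕ), k = w.length + n →
      ∫ x in _root_.cylinder w, r (wordPrefix x k) ∂με = gc w := by
    intro n
    induction n with
    | zero =>
      intro w k hk
      rw [Nat.add_zero] at hk
      subst hk
      have hcongr : ∀ x ∈ _root_.cylinder w, r (wordPrefix x w.length) = r w := by
        intro x hx
        rw [(wordPrefix_eq_iff x w w.length rfl).mpr hx]
      rw [setIntegral_congr_fun (hcylm w) hcongr, setIntegral_const, measureReal_def, hμε w,
        ENNReal.toReal_ofReal (hge0 w)]
      rcases (hge0 w).lt_or_eq with h | h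
      · rw [smul_eq_mul, hr]
        field_simp
      · rw [← h, hgc_of_ge w h.symm]
        simp
    | succ n ih =>
      intro w k hk
      rw [cylinder_succ w, integral_iUnion (fun c => hcylm _) (cylinder_disj w)
        ((hfint k).integrableOn)]
      rw [tsum_congr (fun c => ih (w ++ [c]) k (by simp [hk]; ring))]
      exact (hgccons w).tsum_eq
  -- measurable limit function
  obtain ⟨L, hLm, hLt⟩ :=
    measurable_limit_of_tendsto_metrizable_ae (μ := με)
      (f := fun k x => r (wordPrefix x k)) (L := atTop)
      (fun k => (hfm k).aemeasurable) hlim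
  have hL0 : 0 ≤ᵐ[με] L :=
    hLt.mono fun x hx => ge_of_tendsto' hx fun k => hr0 _
  have hLb : ∀ᵐ x ∂με, L x ≤ 1 / pc :=
    hLt.mono fun x hx => le_of_tendsto' hx fun k => hrb _
  have hLint : Integrable L με := by
    refine (integrable_const (1 / pc)).mono' hLm.aestronglyMeasurable ?_
    filter_upwards [hL0, hLb] with x h0 hb
    rw [Real.norm_of_nonneg h0]; exact hb
  -- integral of L over cylinders
  have hLcyl : ∀ w : List O, ∫ x in _root_.cylinder w, L x ∂με = gc w := by
    intro w
    have hdct : Tendsto (fun k => ∫ x in _root_.cylinder w, r (wordPrefix x k) ∂με) atTop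
        (nhds (∫ x in _root_.cylinder w, L x ∂με)) := by
      refine tendsto_integral_of_dominated_convergence (fun _ => 1 / pc)
        (fun k => ((hfm k).aestronglyMeasurable.restrict))
        (integrable_const _) (fun k => ?_) ?_
      · exact Filter.Eventually.of_forall fun x => by
          rw [Real.norm_of_nonneg (hr0 _)]; exact hrb _
      · exact ae_restrict_of_ae hLt
    have hconst : Tendsto (fun k => ∫ x in _root_.cylinder w, r (wordPrefix x k) ∂με) atTop
        (nhds (gc w)) := by
      refine Tendsto.congr' ?_ tendsto_const_nhds
      filter_upwards [eventually_ge_atTop w.length] with k hk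
      exact (key (k - w.length) w k (by omega)).symm
    exact tendsto_nhds_unique hdct hconst
  have hγcyl : ∀ w : List O, ∫ x in _root_.cylinder w, γ x ∂με = gc w := fun w => by
    rw [← hγ _ (hcylm w), hμc w, ENNReal.toReal_ofReal (hgc0 w)]
  have hγ0 : 0 ≤ᵐ[με] γ := by
    refine ae_nonneg_of_forall_setIntegral_nonneg hγi fun s hs _ => ?_
    rw [← hγ s hs]; exact ENNReal.toReal_nonneg
  -- withDensity measures
  have hsetL : ∀ s : Set (ℕ → O), MeasurableSet s →
      με.withDensity (fun x => ENNReal.ofReal (L x)) s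
        = ENNReal.ofReal (∫ x in s, L x ∂με) := by
    intro s hs
    rw [withDensity_apply _ hs,
      ← ofReal_integral_eq_lintegral_ofReal hLint.integrableOn (ae_restrict_of_ae hL0)]
  have hsetγ : ∀ s : Set (ℕ → O), MeasurableSet s →
      με.withDensity (fun x => ENNReal.ofReal (γ x)) s
        = ENNReal.ofReal (∫ x in s, γ x ∂με) := by
    intro s hs
    rw [withDensity_apply _ hs,
      ← ofReal_integral_eq_lintegral_ofReal hγi.integrableOn (ae_restrict_of_ae hγ0)]
  haveI : IsFiniteMeasure (με.withDensity (fun x => ENNReal.ofReal (L x))) :=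
    isFiniteMeasure_withDensity_ofReal hLint.hasFiniteIntegral
  haveI : IsFiniteMeasure (με.withDensity (fun x => ENNReal.ofReal (γ x))) :=
    isFiniteMeasure_withDensity_ofReal hγi.hasFiniteIntegral
  have hpi : IsPiSystem {S : Set (ℕ → O) | ∃ w : List O, S = _root_.cylinder w} := by
    rintro s ⟨w, rfl⟩ t ⟨v, rfl⟩ ⟨x, hxw, hxv⟩
    have hsub : ∀ (a b : List O), a.length ≤ b.length → x ∈ _root_.cylinder a →
        x ∈ _root_.cylinder b → _root_.cylinder b ⊆ _root_.cylinder a := by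
      intro a b hab hxa hxb y hy i hi
      have hib : i < b.length := lt_of_lt_of_le hi hab
      rw [hy i hib, ← hxb i hib, hxa i hi]
    rcases le_total w.length v.length with h | h
    · exact ⟨v, by rw [Set.inter_eq_self_of_subset_right (hsub w v h hxw hxv)]⟩
    · exact ⟨w, by rw [Set.inter_eq_self_of_subset_left (hsub v w h hxv hxw)]⟩
  have hνeq : με.withDensity (fun x => ENNReal.ofReal (L x))
      = με.withDensity (fun x => ENNReal.ofReal (γ x)) := by
    refine ext_of_generate_finite _ hm hpi ?_ ?_
    · rintro s ⟨w, rfl⟩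
      rw [hsetL _ (hcylm w), hsetγ _ (hcylm w), hLcyl w, hγcyl w]
    · rw [← cylinder_nil (O := O), hsetL _ (hcylm []), hsetγ _ (hcylm []),
        hLcyl [], hγcyl []]
  have hae : (fun x => ENNReal.ofReal (L x)) =ᵐ[με] (fun x => ENNReal.ofReal (γ x)) :=
    (withDensity_eq_iff_of_sigmaFinite
      (hLm.ennreal_ofReal.aemeasurable) (hγm.ennreal_ofReal.aemeasurable)).mp hνeq
  have hLγ : L =ᵐ[με] γ := by
    filter_upwards [hae, hL0, hγ0] with x hx h0 h0'
    have := congrArg ENNReal.toReal hx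
    rwa [ENNReal.toReal_ofReal h0, ENNReal.toReal_ofReal h0'] at this
  filter_upwards [hLt, hLγ] with x hx heq
  rwa [← heq]
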